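/- Let G = (V,E) be a finite perfect graph with vertex weights w : V → ℝ, w(v) ≥ 0 for all v. A function y assigning a nonnegative real y_Q to each nonempty clique Q of G is in the core of the stable set game on (G,w) if and only if y is an optimal solution of the dual LP, i.e., y is dual-feasible (for every vertex v, Σ_{Q : v ∈ Q} y_Q ≥ w(v)) and Σ_Q y_Q is minimum among all dual-feasible nonnegative functions on the nonempty cliques of G. -/

import Mathlib

open scoped Classical

/-- A set of vertices is stable (independent) if no two of its vertices are adjacent. -/
def IsStableSet {V : Type*} (G : SimpleGraph V) (S : Set V) : Prop :=
  S.Pairwise fun u v => ¬ G.Adj u v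

/-- A graph is perfect if every induced subgraph has chromatic number equal to clique number. -/
def IsPerfect {V : Type*} (G : SimpleGraph V) : Prop :=
  ∀ T : Set V, (G.induce T).chromaticNumber = ((G.induce T).cliqueNum : ℕ∞)

/-- `worth(G[T])`: the maximum total weight of a stable set contained in `T`. -/
noncomputable def stableWorth {V : Type*} [Fintype V] (G : SimpleGraph V) (w : V → ℝ)
    (T : Set V) : ℝ :=
  sSup {x : ℝ | ∃ S : Finset V, ↑S ⊆ T ∧ IsStableSet G ↑S ∧ x = ∑ v ∈ S, w v}

/-- The nonempty cliques of `G`, as a finset of finsets. -/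
noncomputable def cliquesOf {V : Type*} [Fintype V] (G : SimpleGraph V) : Finset (Finset V) :=
  Finset.univ.filter fun Q => Q.Nonempty ∧ G.IsClique (↑Q : Set V)

/-- Perfection phrased via colorability. -/
def PerfOn {V : Type*} (G : SimpleGraph V) : Prop :=
  ∀ T : Set V, (G.induce T).Colorable ((G.induce T).cliqueNum)

section Transfer

variable {W : Type*} {V : Type*} [Fintype W] [Fintype V]

/-- Pull a coloring back along an induced embedding, matching clique numbers. -/
lemma colorable_cliqueNum_of_embed (H : SimpleGraph W) (G : SimpleGraph V) (f : W → V)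
    (hinj : Function.Injective f) (hf : ∀ x y, H.Adj x y ↔ G.Adj (f x) (f y))
    (hG : PerfOn G) : H.Colorable H.cliqueNum := by
  set T' : Set V := Set.range f with hT'
  obtain ⟨C⟩ := hG T'
  -- pull back the coloring
  have hcol : H.Colorable ((G.induce T').cliqueNum) := by
    refine ⟨SimpleGraph.Coloring.mk (fun x => C ⟨f x, ⟨x, rfl⟩⟩) ?_⟩
    intro a b hab
    exact C.valid (((hf a b).mp hab : G.Adj (f a) (f b)))
  refine hcol.mono ?_
  -- cliqueNum of the induced image is at most cliqueNum of H
  obtain ⟨s, hs⟩ := (G.induce T').exists_isNClique_cliqueNum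
  -- map s back to W
  have hSurj : ∀ u : T', ∃ x : W, f x = (u : V) := fun u => u.2
  choose g hg using hSurj
  have hginj : Function.Injective g := by
    intro u v huv
    apply Subtype.ext
    rw [← hg u, ← hg v, huv]
  have : H.IsClique ↑(s.image g) := by
    intro a ha b hb hne
    simp only [Finset.coe_image, Set.mem_image, Finset.mem_coe] at ha hb
    obtain ⟨u, hu, rfl⟩ := ha
    obtain ⟨v, hv, rfl⟩ := hb
    have huv : u ≠ v := fun h => hne (by rw [h])
    have := hs.1 hu hv (by simpa using huv)
    rw [hf]
    rw [hg u, hg v]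
    exact this
  have hcard : (s.image g).card = (G.induce T').cliqueNum := by
    rw [Finset.card_image_of_injective _ hginj, hs.2]
  calc (G.induce T').cliqueNum = (s.image g).card := hcard.symm
    _ ≤ H.cliqueNum := SimpleGraph.IsClique.card_le_cliqueNum (tc := this)

lemma perfOn_of_embed (H : SimpleGraph W) (G : SimpleGraph V) (f : W → V)
    (hinj : Function.Injective f) (hf : ∀ x y, H.Adj x y ↔ G.Adj (f x) (f y))
    (hG : PerfOn G) : PerfOn H := by
  intro T
  refine colorable_cliqueNum_of_embed (H.induce T) G (fun x => f x.1) ?_ ?_ hG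
  · intro a b hab
    exact Subtype.ext (hinj hab)
  · intro x y
    exact hf x.1 y.1

lemma PerfOn.self {G : SimpleGraph V} (hG : PerfOn G) : G.Colorable G.cliqueNum :=
  colorable_cliqueNum_of_embed G G id (fun _ _ h => h) (fun _ _ => Iff.rfl) hG

lemma PerfOn.induce {G : SimpleGraph V} (hG : PerfOn G) (T : Set V) : PerfOn (G.induce T) :=
  perfOn_of_embed _ G Subtype.val Subtype.val_injective (fun _ _ => Iff.rfl) hG

end Transfer

section Twin
variable {W : Type*} [Fintype W]

lemma cliqueNum_induce_le (H : SimpleGraph W) (T : Set W) :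
    (H.induce T).cliqueNum ≤ H.cliqueNum := by
  obtain ⟨s, hs⟩ := (H.induce T).exists_isNClique_cliqueNum
  have hclique : H.IsClique ↑(s.image Subtype.val) := by
    intro x hx y hy hxy
    simp only [Finset.coe_image, Set.mem_image, Finset.mem_coe] at hx hy
    obtain ⟨u, hu, rfl⟩ := hx
    obtain ⟨v, hv, rfl⟩ := hy
    exact hs.1 hu hv (fun h => hxy (by rw [h]))
  have hcard : (s.image Subtype.val).card = (H.induce T).cliqueNum := by
    rw [Finset.card_image_of_injective _ Subtype.val_injective, hs.2]
  calc (H.induce T).cliqueNum = (s.image Subtype.val).card := hcard.symm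
    _ ≤ H.cliqueNum := SimpleGraph.IsClique.card_le_cliqueNum (tc := hclique)

/-- Lovász' replication lemma, coloring form: if `a, b` are true twins in `H` and
`H - b` is perfect then `H` is `ω(H)`-colorable. -/
lemma twin_colorable (H : SimpleGraph W) (a b : W) (hne : a ≠ b) (hadj : H.Adj a b)
    (twin : ∀ u, u ≠ a → u ≠ b → (H.Adj a u ↔ H.Adj b u))
    (hp : PerfOn (H.induce {x | x ≠ b})) : H.Colorable H.cliqueNum := by
  set G₀ := H.induce {x : W | x ≠ b} with hG₀
  have ha₀ : a ∈ {x : W | x ≠ b} := hne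
  set a₀ : {x : W | x ≠ b} := ⟨a, ha₀⟩ with ha₀def
  set ω₀ := G₀.cliqueNum with hω₀
  obtain ⟨C⟩ := hp.self
  -- ω₀ ≤ ω(H)
  have hental : ω₀ ≤ H.cliqueNum := cliqueNum_induce_le H _
  by_cases hA : ∃ s, G₀.IsNClique ω₀ s ∧ a₀ ∈ s
  · -- a is in a maximum clique of H - b : extend clique by b and color b with a new color
    obtain ⟨s, hs, has⟩ := hA
    have hbnot : b ∉ s.image Subtype.val := by
      simp only [Finset.mem_image]
      rintro ⟨u, _, h⟩
      exact u.2 h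
    have hclique : H.IsClique ↑(insert b (s.image Subtype.val)) := by
      intro x hx y hy hxy
      simp only [Finset.coe_insert, Set.mem_insert_iff, Finset.coe_image, Set.mem_image,
        Finset.mem_coe] at hx hy
      have key : ∀ u : {x : W | x ≠ b}, u ∈ s → (u : W) ≠ b ∧ ((u:W) ≠ a → H.Adj b u) := by
        intro u hu
        refine ⟨u.2, fun hua => ?_⟩
        have : u ≠ a₀ := fun h => hua (by rw [h])
        have hadj' : G₀.Adj a₀ u := hs.1 has hu (Ne.symm this)
        exact (twin u hua u.2).mp hadj'
      rcases hx with rfl | ⟨u, hu, rfl⟩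
      · rcases hy with rfl | ⟨v, hv, rfl⟩
        · exact absurd rfl hxy
        · rcases eq_or_ne (v : W) a with hva | hva
          · rw [hva]; exact hadj.symm
          · exact (key v hv).2 hva
      · rcases hy with rfl | ⟨v, hv, rfl⟩
        · rcases eq_or_ne (u : W) a with hua | hua
          · rw [hua]; exact hadj
          · exact ((key u hu).2 hua).symm
        · have huv : u ≠ v := fun h => hxy (by rw [h])
          exact hs.1 hu hv huv
    have hcard : (insert b (s.image Subtype.val)).card = ω₀ + 1 := by
      rw [Finset.card_insert_of_notMem hbnot,
        Finset.card_image_of_injective _ Subtype.val_injective, hs.2]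
    have homega : ω₀ + 1 ≤ H.cliqueNum := by
      calc ω₀ + 1 = (insert b (s.image Subtype.val)).card := hcard.symm
        _ ≤ H.cliqueNum := SimpleGraph.IsClique.card_le_cliqueNum (tc := hclique)
    have hcol : H.Colorable (ω₀ + 1) := by
      refine ⟨SimpleGraph.Coloring.mk
        (fun x => if hx : x = b then Fin.last ω₀ else (C ⟨x, hx⟩).castSucc) ?_⟩
      intro u v huv
      by_cases hu : u = b <;> by_cases hv : v = b
      · subst hu; subst hv; exact absurd huv (H.irrefl)
      · subst hu
        rw [dif_pos rfl, dif_neg hv]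
        exact (Fin.castSucc_lt_last _).ne'
      · subst hv
        rw [dif_neg hu, dif_pos rfl]
        exact (Fin.castSucc_lt_last _).ne
      · rw [dif_neg hu, dif_neg hv]
        intro hCC
        exact C.valid (by exact huv : G₀.Adj ⟨u, hu⟩ ⟨v, hv⟩) (Fin.castSucc_injective _ hCC)
    exact hcol.mono homega
  · -- a is in no maximum clique of H - b
    push_neg at hA
    have hω₀pos : 1 ≤ ω₀ := by
      have : G₀.IsClique ↑({a₀} : Finset {x : W | x ≠ b}) := by simp
      have := SimpleGraph.IsClique.card_le_cliqueNum (tc := this)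
      simpa using this
    set B₁ : Set {x : W | x ≠ b} := {u | C u ≠ C a₀ ∨ u = a₀} with hB₁
    set ω₁ := (G₀.induce B₁).cliqueNum with hω₁def
    obtain ⟨D⟩ := hp B₁
    have hω₁ : ω₁ < ω₀ := by
      obtain ⟨s, hs⟩ := (G₀.induce B₁).exists_isNClique_cliqueNum
      have hclique : G₀.IsClique ↑(s.image Subtype.val) := by
        intro x hx y hy hxy
        simp only [Finset.coe_image, Set.mem_image, Finset.mem_coe] at hx hy
        obtain ⟨u, hu, rfl⟩ := hx
        obtain ⟨v, hv, rfl⟩ := hy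
        exact hs.1 hu hv (fun h => hxy (by rw [h]))
      have hcard : (s.image Subtype.val).card = ω₁ := by
        rw [Finset.card_image_of_injective _ Subtype.val_injective, hs.2]
      have hle : ω₁ ≤ ω₀ := by
        rw [← hcard]
        exact SimpleGraph.IsClique.card_le_cliqueNum (tc := hclique)
      rcases lt_or_eq_of_le hle with h | h
      · exact h
      · exfalso
        have hnclique : G₀.IsNClique ω₀ (s.image Subtype.val) := ⟨hclique, by rw [hcard, h]⟩
        have hanot : a₀ ∉ s.image Subtype.val := hA _ hnclique
        -- C is injective on this max clique, so all ω₀ colors are used, incl. C a₀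
        have hinj : Set.InjOn C ↑(s.image Subtype.val) := by
          intro u hu v hv hCC
          by_contra hne'
          exact C.valid (hclique hu hv hne') hCC
        have himgcard : ((s.image Subtype.val).image C).card = ω₀ := by
          rw [Finset.card_image_of_injOn hinj, hnclique.2]
        have huniv : (s.image Subtype.val).image C = Finset.univ := by
          apply Finset.eq_univ_of_card
          rw [himgcard]; simp [hω₀]
        have : C a₀ ∈ (s.image Subtype.val).image C := by rw [huniv]; simp
        obtain ⟨u, hu, hCu⟩ := Finset.mem_image.mp this
        obtain ⟨u', hu', rfl⟩ := Finset.mem_image.mp hu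
        have : (u' : {x : W | x ≠ b}) ∈ B₁ := u'.2
        rcases this with h1 | h1
        · exact h1 hCu
        · rw [h1] at hu; exact hanot hu
    -- the final coloring of H with ω₀ colors
    have hmem : ∀ (x : W) (hx : x ≠ b), ¬(C ⟨x, hx⟩ = C a₀ ∧ x ≠ a) → (⟨x, hx⟩ : {x : W | x ≠ b}) ∈ B₁ := by
      intro x hx h
      by_cases hxa : x = a
      · right; exact Subtype.ext hxa
      · left; intro hC; exact h ⟨hC, hxa⟩
    set special : Fin ω₀ := ⟨ω₀ - 1, by omega⟩ with hspecial
    set g : W → Fin ω₀ := fun x =>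
      if hx : x = b then special
      else if hx2 : C ⟨x, hx⟩ = C a₀ ∧ x ≠ a then special
      else Fin.castLE (le_of_lt hω₁) (D ⟨⟨x, hx⟩, hmem x hx hx2⟩) with hg
    -- values in the D-branch are < ω₀ - 1
    have hDval : ∀ (x : W) (hx : x ≠ b) (hx2 : ¬(C ⟨x, hx⟩ = C a₀ ∧ x ≠ a)),
        (g x).val < ω₀ - 1 := by
      intro x hx hx2
      rw [hg]
      simp only
      rw [dif_neg hx, dif_neg hx2]
      have : (D ⟨⟨x, hx⟩, hmem x hx hx2⟩).val < ω₁ := (D _).isLt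
      simp only [Fin.coe_castLE]
      omega
    -- "special class" vertices are pairwise non-adjacent
    have hspec2 : ∀ (x : W), g x = special → x = b ∨ (∃ hx : x ≠ b, C ⟨x, hx⟩ = C a₀ ∧ x ≠ a) := by
      intro x hgx
      by_cases hx : x = b
      · exact Or.inl hx
      · by_cases hx2 : C ⟨x, hx⟩ = C a₀ ∧ x ≠ a
        · exact Or.inr ⟨hx, hx2⟩
        · exfalso
          have := hDval x hx hx2
          rw [hgx] at this
          simp [hspecial] at this
    have hnotadj : ∀ x y : W, g x = special → g y = special → ¬H.Adj x y := by
      have base : ∀ (x y : W) (hx : x ≠ b) (hy : y ≠ b), C ⟨x, hx⟩ = C a₀ → C ⟨y, hy⟩ = C a₀ →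
          ¬H.Adj x y := by
        intro x y hx hy hCx hCy hadj'
        have : G₀.Adj ⟨x, hx⟩ ⟨y, hy⟩ := hadj'
        exact C.valid this (by rw [hCx, hCy])
      have bcase : ∀ (y : W) (hy : y ≠ b), C ⟨y, hy⟩ = C a₀ → y ≠ a → ¬H.Adj b y := by
        intro y hy hCy hya hadj'
        have : H.Adj a y := (twin y hya hy).mpr hadj'
        have : G₀.Adj a₀ ⟨y, hy⟩ := this
        exact C.valid this (by rw [hCy])
      intro x y hgx hgy hadj'
      rcases hspec2 x hgx with rfl | ⟨hx, hCx, hxa⟩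
      · rcases hspec2 y hgy with rfl | ⟨hy, hCy, hya⟩
        · exact H.irrefl hadj'
        · exact bcase y hy hCy hya hadj'
      · rcases hspec2 y hgy with rfl | ⟨hy, hCy, hya⟩
        · exact bcase x hx hCx hxa hadj'.symm
        · exact base x y hx hy hCx hCy hadj'
    have hcol : H.Colorable ω₀ := by
      refine ⟨SimpleGraph.Coloring.mk g ?_⟩
      intro u v huv hguv
      by_cases hu' : g u = special
      · have hv' : g v = special := by rw [← hguv, hu']
        exact hnotadj u v hu' hv' huv
      · by_cases hv' : g v = special
        · exact hu' (by rw [hguv, hv'])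
        · -- both in the D-branch
          have hub : u ≠ b := by rintro rfl; exact hu' (by rw [hg]; simp)
          have hvb : v ≠ b := by rintro rfl; exact hv' (by rw [hg]; simp)
          have hu2 : ¬(C ⟨u, hub⟩ = C a₀ ∧ u ≠ a) := by
            intro h; exact hu' (by rw [hg]; simp only; rw [dif_neg hub, dif_pos h])
          have hv2 : ¬(C ⟨v, hvb⟩ = C a₀ ∧ v ≠ a) := by
            intro h; exact hv' (by rw [hg]; simp only; rw [dif_neg hvb, dif_pos h])
          have hadjG₁ : (G₀.induce B₁).Adj ⟨⟨u, hub⟩, hmem u hub hu2⟩ ⟨⟨v, hvb⟩, hmem v hvb hv2⟩ :=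
            huv
          have hD := D.valid hadjG₁
          apply hD
          have h1 : g u = Fin.castLE (le_of_lt hω₁) (D ⟨⟨u, hub⟩, hmem u hub hu2⟩) := by
            rw [hg]; simp only; rw [dif_neg hub, dif_neg hu2]
          have h2 : g v = Fin.castLE (le_of_lt hω₁) (D ⟨⟨v, hvb⟩, hmem v hvb hv2⟩) := by
            rw [hg]; simp only; rw [dif_neg hvb, dif_neg hv2]
          rw [h1, h2] at hguv
          exact Fin.castLE_injective _ hguv
    exact hcol.mono hental
end Twin

section TwinPerfect
variable {W : Type*} [Fintype W]

lemma twin_perfect (H : SimpleGraph W) (a b : W) (hne : a ≠ b) (hadj : H.Adj a b)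
    (twin : ∀ u, u ≠ a → u ≠ b → (H.Adj a u ↔ H.Adj b u))
    (hp : PerfOn (H.induce {x | x ≠ b})) : PerfOn H := by
  intro T
  by_cases hbT : b ∈ T
  · by_cases haT : a ∈ T
    · -- both a and b in T: apply the twin coloring lemma inside `T`
      set a' : T := ⟨a, haT⟩
      set b' : T := ⟨b, hbT⟩
      refine twin_colorable (H.induce T) a' b' (fun h => hne (congrArg Subtype.val h)) hadj ?_ ?_
      · intro u hua hub
        have h1 : (u : W) ≠ a := fun h => hua (Subtype.ext h)
        have h2 : (u : W) ≠ b := fun h => hub (Subtype.ext h)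
        exact twin u.1 h1 h2
      · -- (H.induce T).induce {x ≠ b'} embeds into H.induce {x ≠ b}
        refine perfOn_of_embed _ (H.induce {x : W | x ≠ b})
          (fun x => ⟨x.1.1, fun h => x.2 (Subtype.ext h)⟩) ?_ (fun _ _ => Iff.rfl) hp
        intro x y hxy
        exact Subtype.ext (Subtype.ext (Subtype.mk_eq_mk.mp hxy))
    · -- b ∈ T, a ∉ T : embed into H - b sending b to its twin a
      refine colorable_cliqueNum_of_embed (H.induce T) (H.induce {x : W | x ≠ b})
        (fun x => if hx : (x : W) = b then ⟨a, hne⟩ else ⟨x.1, hx⟩) ?_ ?_ hp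
      · intro x y hxy
        dsimp only at hxy
        by_cases hx : (x : W) = b <;> by_cases hy : (y : W) = b
        · exact Subtype.ext (hx.trans hy.symm)
        · rw [dif_pos hx, dif_neg hy] at hxy
          exact absurd ((Subtype.mk_eq_mk.mp hxy).symm ▸ y.2 : a ∈ T) haT
        · rw [dif_neg hx, dif_pos hy] at hxy
          exact absurd ((Subtype.mk_eq_mk.mp hxy) ▸ x.2 : a ∈ T) haT
        · rw [dif_neg hx, dif_neg hy] at hxy
          exact Subtype.ext (Subtype.mk_eq_mk.mp hxy)
      · intro x y
        split_ifs with hx hy hy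
        · refine iff_of_false (fun h => ?_) H.irrefl
          have h' : H.Adj (x : W) (y : W) := h
          rw [hx, hy] at h'
          exact H.irrefl h'
        · have hya : (y : W) ≠ a := fun h => haT (h ▸ y.2)
          rw [show ((H.induce T).Adj x y ↔ H.Adj (x : W) (y : W)) from Iff.rfl, hx]
          exact (twin y.1 hya hy).symm
        · have hxa : (x : W) ≠ a := fun h => haT (h ▸ x.2)
          rw [show ((H.induce T).Adj x y ↔ H.Adj (x : W) (y : W)) from Iff.rfl, hy]
          constructor
          · intro h
            exact ((twin x.1 hxa hx).mpr h.symm).symm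
          · intro h
            exact ((twin x.1 hxa hx).mp h.symm).symm
        · exact Iff.rfl
  · -- b ∉ T : embed into H - b
    refine colorable_cliqueNum_of_embed (H.induce T) (H.induce {x : W | x ≠ b})
      (fun x => ⟨x.1, fun h => hbT (h ▸ x.2)⟩) ?_ (fun _ _ => Iff.rfl) hp
    intro x y hxy
    exact Subtype.ext (Subtype.mk_eq_mk.mp hxy)

end TwinPerfect

section Rep
variable {V : Type*} [Fintype V]

lemma rep_aux (G : SimpleGraph V) (hG : PerfOn G) :
    ∀ (n : ℕ) {W : Type*} [Fintype W] (H : SimpleGraph W) (π : W → V),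
      Fintype.card W ≤ n →
      (∀ x y, H.Adj x y ↔ (G.Adj (π x) (π y) ∨ (π x = π y ∧ x ≠ y))) → PerfOn H := by
  intro n
  induction n with
  | zero =>
    intro W _ H π hcard hπ
    have : IsEmpty W := Fintype.card_eq_zero_iff.mp (Nat.le_zero.mp hcard)
    intro T
    haveI : IsEmpty T := ⟨fun x => IsEmpty.false x.1⟩
    exact SimpleGraph.Colorable.of_isEmpty (G := H.induce T) _
  | succ n ih =>
    intro W _ H π hcard hπ
    by_cases hcol : ∃ x y : W, x ≠ y ∧ π x = π y
    · obtain ⟨x, y, hxy, hpi⟩ := hcol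
      have hadj : H.Adj x y := (hπ x y).mpr (Or.inr ⟨hpi, hxy⟩)
      have twin : ∀ u, u ≠ x → u ≠ y → (H.Adj x u ↔ H.Adj y u) := by
        intro u hux huy
        rw [hπ, hπ]
        constructor
        · rintro (h | ⟨h1, _⟩)
          · exact Or.inl (hpi ▸ h)
          · exact Or.inr ⟨hpi ▸ h1, Ne.symm huy⟩
        · rintro (h | ⟨h1, _⟩)
          · exact Or.inl (hpi ▸ h)
          · exact Or.inr ⟨hpi ▸ h1, Ne.symm hux⟩
      refine twin_perfect H x y hxy hadj twin ?_
      have hlt : Fintype.card {z : W | z ≠ y} < Fintype.card W :=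
        Fintype.card_subtype_lt (x := y) (by simp)
      refine ih (H.induce {z : W | z ≠ y}) (fun z => π z.1) (by omega) ?_
      intro u v
      rw [show (H.induce {z : W | z ≠ y}).Adj u v ↔ H.Adj u.1 v.1 from Iff.rfl, hπ]
      constructor
      · rintro (h | ⟨h1, h2⟩)
        · exact Or.inl h
        · exact Or.inr ⟨h1, fun h => h2 (congrArg Subtype.val h)⟩
      · rintro (h | ⟨h1, h2⟩)
        · exact Or.inl h
        · exact Or.inr ⟨h1, fun h => h2 (Subtype.ext h)⟩
    · push_neg at hcol
      have hinj : Function.Injective π := by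
        intro u v huv
        by_contra hne
        exact hcol u v hne huv
      refine perfOn_of_embed H G π hinj ?_ hG
      intro u v
      rw [hπ]
      constructor
      · rintro (h | ⟨h1, h2⟩)
        · exact h
        · exact absurd h1 (hcol u v h2)
      · exact Or.inl

lemma rep_perfect (G : SimpleGraph V) (hG : PerfOn G) {W : Type*} [Fintype W]
    (H : SimpleGraph W) (π : W → V)
    (hπ : ∀ x y, H.Adj x y ↔ (G.Adj (π x) (π y) ∨ (π x = π y ∧ x ≠ y))) : PerfOn H :=
  rep_aux G hG (Fintype.card W) H π le_rfl hπ

end Rep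

section WCol
variable {V : Type*} [Fintype V]

/-- Weighted coloring theorem for perfect graphs: the vertices can be covered by at most
`max_Q ∑_{v ∈ Q} h v` stable sets such that each `v` is covered at least `h v` times. -/
lemma wcol (G : SimpleGraph V) (hG : PerfOn G) (h : V → ℕ) :
    ∃ (m : ℕ) (T : Fin m → Finset V),
      m ≤ (cliquesOf G).sup (fun Q => ∑ v ∈ Q, h v) ∧
      (∀ j, IsStableSet G ↑(T j)) ∧
      (∀ v, h v ≤ (Finset.univ.filter (fun j => v ∈ T j)).card) := by
  set H : SimpleGraph (Σ v : V, Fin (h v)) :=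
    { Adj := fun x y => G.Adj x.1 y.1 ∨ (x.1 = y.1 ∧ x ≠ y)
      symm := by
        refine ⟨?_⟩
        rintro x y (hxy | ⟨h1, h2⟩)
        · exact Or.inl hxy.symm
        · exact Or.inr ⟨h1.symm, h2.symm⟩
      loopless := by
        refine ⟨?_⟩
        rintro x (hxx | ⟨_, h2⟩)
        · exact G.irrefl hxx
        · exact h2 rfl } with hH
  have hHperf : PerfOn H := rep_perfect G hG H Sigma.fst (fun x y => Iff.rfl)
  obtain ⟨C⟩ := hHperf.self
  set m := H.cliqueNum with hm
  refine ⟨m, fun j => Finset.univ.filter (fun v => ∃ i : Fin (h v), C ⟨v, i⟩ = j), ?_, ?_, ?_⟩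
  · -- m is at most the maximum h-weight of a clique
    obtain ⟨s, hs⟩ := H.exists_isNClique_cliqueNum
    rcases s.eq_empty_or_nonempty with rfl | hsne
    · rw [hm, ← hs.2]; simp
    · set Q := s.image Sigma.fst with hQ
      have hQmem : Q ∈ cliquesOf G := by
        rw [cliquesOf, Finset.mem_filter]
        refine ⟨Finset.mem_univ _, hsne.image _, ?_⟩
        intro u hu v hv huv
        simp only [hQ, Finset.coe_image, Set.mem_image, Finset.mem_coe] at hu hv
        obtain ⟨x, hx, rfl⟩ := hu
        obtain ⟨y, hy, rfl⟩ := hv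
        have hxy : x ≠ y := fun e => huv (congrArg Sigma.fst e)
        rcases hs.1 hx hy hxy with hadj | ⟨h1, _⟩
        · exact hadj
        · exact absurd h1 huv
      have hfib : m = ∑ v ∈ Q, (s.filter (fun x => x.1 = v)).card := by
        rw [hm, ← hs.2]
        exact Finset.card_eq_sum_card_fiberwise
          (fun x hx => Finset.mem_image_of_mem Sigma.fst hx)
      have hfible : ∀ v, (s.filter (fun x => x.1 = v)).card ≤ h v := by
        intro v
        have := Finset.card_le_card_of_injOn (f := fun x : (Σ v : V, Fin (h v)) => (x.2 : ℕ))
          (s := s.filter (fun x => x.1 = v)) (t := Finset.range (h v)) ?_ ?_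
        · simpa using this
        · rintro ⟨x1, x2⟩ hx
          have hx1 : x1 = v := (Finset.mem_filter.mp hx).2
          subst hx1
          simpa using x2.isLt
        · rintro ⟨x1, x2⟩ hx ⟨y1, y2⟩ hy hval
          have hx1 : x1 = v := (Finset.mem_filter.mp (Finset.mem_coe.mp hx)).2
          have hy1 : y1 = v := (Finset.mem_filter.mp (Finset.mem_coe.mp hy)).2
          subst hx1; subst hy1
          simp only at hval
          exact congrArg (Sigma.mk _) (Fin.val_injective hval)
      calc m = ∑ v ∈ Q, (s.filter (fun x => x.1 = v)).card := hfib
        _ ≤ ∑ v ∈ Q, h v := Finset.sum_le_sum (fun v _ => hfible v)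
        _ ≤ (cliquesOf G).sup (fun Q => ∑ v ∈ Q, h v) := Finset.le_sup (f := fun Q => ∑ v ∈ Q, h v) hQmem
  · -- each class is stable
    intro j u hu v hv huv
    simp only [Finset.coe_filter, Set.mem_setOf_eq] at hu hv
    obtain ⟨-, i, hi⟩ := hu
    obtain ⟨-, i', hi'⟩ := hv
    intro hadj
    exact C.valid (Or.inl hadj : H.Adj ⟨u, i⟩ ⟨v, i'⟩) (by rw [hi, hi'])
  · -- each vertex is covered at least h v times
    intro v
    have := Finset.card_le_card_of_injOn (f := fun i : Fin (h v) => C ⟨v, i⟩)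
      (s := Finset.univ)
      (t := Finset.univ.filter (fun j => v ∈ Finset.univ.filter
        (fun u => ∃ i : Fin (h u), C ⟨u, i⟩ = j))) ?_ ?_
    · simpa using this
    · intro i _
      exact Finset.mem_filter.mpr ⟨Finset.mem_univ _, Finset.mem_filter.mpr ⟨Finset.mem_univ _, i, rfl⟩⟩
    · intro i _ i' _ hCC
      by_contra hii'
      have hne : (⟨v, i⟩ : Σ u : V, Fin (h u)) ≠ ⟨v, i'⟩ := by
        intro e
        apply hii'
        simpa using e
      exact C.valid (Or.inr ⟨rfl, hne⟩ : H.Adj ⟨v, i⟩ ⟨v, i'⟩) hCC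

end WCol

section Worth
variable {V : Type*} [Fintype V] (G : SimpleGraph V) (w : V → ℝ)

lemma worthSet_finite (T : Set V) :
    {x : ℝ | ∃ S : Finset V, ↑S ⊆ T ∧ IsStableSet G ↑S ∧ x = ∑ v ∈ S, w v}.Finite := by
  apply Set.Finite.subset (Set.finite_univ.image (fun S : Finset V => ∑ v ∈ S, w v))
  rintro x ⟨S, -, -, rfl⟩
  exact ⟨S, trivial, rfl⟩

lemma worthSet_nonempty (T : Set V) :
    {x : ℝ | ∃ S : Finset V, ↑S ⊆ T ∧ IsStableSet G ↑S ∧ x = ∑ v ∈ S, w v}.Nonempty := by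
  refine ⟨0, ⟨∅, by simp, ?_, by simp⟩⟩
  simp [IsStableSet]

lemma le_stableWorth {T : Set V} (S : Finset V) (hsub : ↑S ⊆ T) (hst : IsStableSet G ↑S) :
    ∑ v ∈ S, w v ≤ stableWorth G w T :=
  le_csSup (worthSet_finite G w T).bddAbove ⟨S, hsub, hst, rfl⟩

lemma exists_stableWorth (T : Set V) :
    ∃ S : Finset V, ↑S ⊆ T ∧ IsStableSet G ↑S ∧ stableWorth G w T = ∑ v ∈ S, w v :=
  (worthSet_nonempty G w T).csSup_mem (worthSet_finite G w T)

lemma clique_stable_card_le_one {Q S : Finset V} (hQ : G.IsClique ↑Q)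
    (hS : IsStableSet G ↑S) : (S.filter (· ∈ Q)).card ≤ 1 := by
  rw [Finset.card_le_one]
  intro a ha b hb
  rw [Finset.mem_filter] at ha hb
  by_contra hne
  exact hS ha.1 hb.1 hne (hQ ha.2 hb.2 hne)

lemma sum_feas_swap (y : Finset V → ℝ) (S : Finset V) :
    ∑ v ∈ S, ∑ Q ∈ (cliquesOf G).filter (fun Q => v ∈ Q), y Q
      = ∑ Q ∈ cliquesOf G, ((S.filter (· ∈ Q)).card : ℝ) * y Q := by
  have h1 : ∀ v, ∑ Q ∈ (cliquesOf G).filter (fun Q => v ∈ Q), y Q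
      = ∑ Q ∈ cliquesOf G, if v ∈ Q then y Q else 0 := fun v => Finset.sum_filter _ _
  simp_rw [h1]
  rw [Finset.sum_comm]
  apply Finset.sum_congr rfl
  intro Q _
  rw [← Finset.sum_filter, Finset.sum_const, nsmul_eq_mul]

/-- Weak-duality workhorse: a stable set's weight is below the `y`-mass of any collection of
cliques containing all cliques meeting it. -/
lemma stable_sum_le (y : Finset V → ℝ) (hy : ∀ Q ∈ cliquesOf G, 0 ≤ y Q)
    (S : Finset V) (hS : IsStableSet G ↑S)
    (hfeas : ∀ v, v ∈ S → w v ≤ ∑ Q ∈ (cliquesOf G).filter (fun Q => v ∈ Q), y Q)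
    (p : Finset V → Prop)
    (hp : ∀ Q ∈ cliquesOf G, (∃ x, x ∈ Q ∧ x ∈ S) → p Q) :
    ∑ v ∈ S, w v ≤ ∑ Q ∈ (cliquesOf G).filter p, y Q := by
  have step1 : ∑ v ∈ S, w v ≤ ∑ Q ∈ cliquesOf G, ((S.filter (· ∈ Q)).card : ℝ) * y Q := by
    rw [← sum_feas_swap]
    exact Finset.sum_le_sum hfeas
  refine step1.trans ?_
  rw [← Finset.sum_filter_add_sum_filter_not (cliquesOf G) p
    (fun Q => ((S.filter (· ∈ Q)).card : ℝ) * y Q)]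
  have h2 : ∑ Q ∈ (cliquesOf G).filter (fun Q => ¬ p Q),
      ((S.filter (· ∈ Q)).card : ℝ) * y Q = 0 := by
    apply Finset.sum_eq_zero
    intro Q hQ
    rw [Finset.mem_filter] at hQ
    have hcard : (S.filter (· ∈ Q)).card = 0 := by
      rw [Finset.card_eq_zero, Finset.filter_eq_empty_iff]
      intro x hxS hxQ
      exact hQ.2 (hp Q hQ.1 ⟨x, hxQ, hxS⟩)
    rw [hcard]
    simp
  rw [h2, add_zero]
  apply Finset.sum_le_sum
  intro Q hQ
  rw [Finset.mem_filter] at hQ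
  have hQclique : G.IsClique ↑Q := ((Finset.mem_filter.mp hQ.1).2).2
  have hcard : ((S.filter (· ∈ Q)).card : ℝ) ≤ 1 := by
    exact_mod_cast clique_stable_card_le_one G hQclique hS
  calc ((S.filter (· ∈ Q)).card : ℝ) * y Q ≤ 1 * y Q :=
        mul_le_mul_of_nonneg_right hcard (hy Q hQ.1)
    _ = y Q := one_mul _

end Worth

section Key
variable {V : Type*} [Fintype V]

lemma clique_stable_card_le_one' (G : SimpleGraph V) {Q S : Finset V} (hQ : G.IsClique ↑Q)
    (hS : IsStableSet G ↑S) : (Q.filter (· ∈ S)).card ≤ 1 := by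
  rw [Finset.card_le_one]
  intro a ha b hb
  rw [Finset.mem_filter] at ha hb
  by_contra hne
  exact hS ha.2 hb.2 hne (hQ ha.1 hb.1 hne)

lemma key_clique (G : SimpleGraph V) (hG : PerfOn G) (w : V → ℝ) (hw : ∀ v, 0 ≤ w v)
    (hpos : 0 < stableWorth G w Set.univ) :
    ∃ Q, Q ∈ cliquesOf G ∧ (∀ v ∈ Q, 0 < w v) ∧
      ∀ S : Finset V, IsStableSet G ↑S → ∑ v ∈ S, w v = stableWorth G w Set.univ →
        ∃ x, x ∈ Q ∧ x ∈ S := by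
  set α := stableWorth G w Set.univ with hα
  set M : Finset (Finset V) :=
    Finset.univ.filter (fun S => IsStableSet G ↑S ∧ ∑ v ∈ S, w v = α) with hM
  have hMne : M.Nonempty := by
    obtain ⟨S₀, -, hst, heq⟩ := exists_stableWorth G w Set.univ
    exact ⟨S₀, Finset.mem_filter.mpr ⟨Finset.mem_univ _, hst, heq.symm⟩⟩
  set k := M.card with hk
  have hk1 : 1 ≤ k := Finset.card_pos.mpr hMne
  set h : V → ℕ := fun v => (M.filter (fun S => v ∈ S)).card with hh
  -- Step 1: some clique meets every maximum-weight stable set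
  have hstep1 : ∃ Q₀, Q₀ ∈ cliquesOf G ∧ ∀ S ∈ M, ∃ x, x ∈ Q₀ ∧ x ∈ S := by
    by_contra hcon
    push_neg at hcon
    -- weighted clique number bound
    have hsup : (cliquesOf G).sup (fun Q => ∑ v ∈ Q, h v) ≤ k - 1 := by
      apply Finset.sup_le
      intro Q hQ
      obtain ⟨S₀, hS₀M, hS₀dis⟩ := hcon Q hQ
      have hQclique : G.IsClique ↑Q := (Finset.mem_filter.mp hQ).2.2
      have hcount : ∑ v ∈ Q, h v = ∑ S ∈ M, (Q.filter (· ∈ S)).card := by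
        rw [hh]
        simp only [Finset.card_filter]
        rw [Finset.sum_comm]
      rw [hcount]
      have hzero : (Q.filter (· ∈ S₀)).card = 0 := by
        rw [Finset.card_eq_zero, Finset.filter_eq_empty_iff]
        intro x hx
        exact hS₀dis x hx
      calc ∑ S ∈ M, (Q.filter (· ∈ S)).card
          = ∑ S ∈ M.erase S₀, (Q.filter (· ∈ S)).card + (Q.filter (· ∈ S₀)).card := by
            rw [Finset.sum_erase_add _ _ hS₀M]
        _ = ∑ S ∈ M.erase S₀, (Q.filter (· ∈ S)).card := by rw [hzero, add_zero]
        _ ≤ ∑ S ∈ M.erase S₀, 1 := by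
            apply Finset.sum_le_sum
            intro S hS
            have hSst : IsStableSet G ↑S :=
              (Finset.mem_filter.mp (Finset.mem_of_mem_erase hS)).2.1
            exact clique_stable_card_le_one' G hQclique hSst
        _ = (M.erase S₀).card := by rw [Finset.sum_const, smul_eq_mul, mul_one]
        _ = k - 1 := by rw [Finset.card_erase_of_mem hS₀M]
    obtain ⟨m, T, hmle, hTst, hTcov⟩ := wcol G hG h
    have hmk : m < k := by
      have := hmle.trans hsup
      omega
    -- double counting the total weight
    have e1 : (k : ℝ) * α = ∑ S ∈ M, ∑ v ∈ S, w v := by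
      rw [Finset.sum_congr rfl (fun S hS => (Finset.mem_filter.mp hS).2.2),
        Finset.sum_const, nsmul_eq_mul]
    have e2 : ∑ S ∈ M, ∑ v ∈ S, w v = ∑ v : V, (h v : ℝ) * w v := by
      have : ∀ S ∈ M, ∑ v ∈ S, w v = ∑ v : V, if v ∈ S then w v else 0 := by
        intro S _
        rw [Finset.sum_ite_mem, Finset.univ_inter]
      rw [Finset.sum_congr rfl this, Finset.sum_comm]
      apply Finset.sum_congr rfl
      intro v _
      rw [← Finset.sum_filter, Finset.sum_const, nsmul_eq_mul, hh]
    have e3 : ∑ v : V, (h v : ℝ) * w v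
        ≤ ∑ v : V, ((Finset.univ.filter (fun j => v ∈ T j)).card : ℝ) * w v := by
      apply Finset.sum_le_sum
      intro v _
      exact mul_le_mul_of_nonneg_right (by exact_mod_cast hTcov v) (hw v)
    have e4 : ∑ v : V, ((Finset.univ.filter (fun j => v ∈ T j)).card : ℝ) * w v
        = ∑ j : Fin m, ∑ v ∈ T j, w v := by
      have : ∀ v : V, ((Finset.univ.filter (fun j => v ∈ T j)).card : ℝ) * w v
          = ∑ j : Fin m, if v ∈ T j then w v else 0 := by
        intro v
        rw [← Finset.sum_filter, Finset.sum_const, nsmul_eq_mul]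
      rw [Finset.sum_congr rfl (fun v _ => this v), Finset.sum_comm]
      apply Finset.sum_congr rfl
      intro j _
      rw [Finset.sum_ite_mem, Finset.univ_inter]
    have e5 : ∑ j : Fin m, ∑ v ∈ T j, w v ≤ (m : ℝ) * α := by
      calc ∑ j : Fin m, ∑ v ∈ T j, w v ≤ ∑ _j : Fin m, α :=
            Finset.sum_le_sum (fun j _ =>
              le_stableWorth G w (T j) (by simp) (hTst j))
        _ = (m : ℝ) * α := by rw [Finset.sum_const, nsmul_eq_mul]; simp
    have : (k : ℝ) * α ≤ (m : ℝ) * α := by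
      rw [e1, e2 ]
      exact e3.trans (e4 ▸ e5)
    have hlt : (m : ℝ) * α < (k : ℝ) * α :=
      mul_lt_mul_of_pos_right (by exact_mod_cast hmk) hpos
    exact absurd (this.trans_lt hlt) (lt_irrefl _)
  -- Step 2: prune zero-weight vertices from the clique
  obtain ⟨Q₀, hQ₀, hQ₀meet⟩ := hstep1
  have hQ₀clique : G.IsClique ↑Q₀ := (Finset.mem_filter.mp hQ₀).2.2
  set Q := Q₀.filter (fun v => 0 < w v) with hQdef
  have hmeet : ∀ S ∈ M, ∃ x, x ∈ Q ∧ x ∈ S := by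
    intro S hSM
    obtain ⟨x, hxQ₀, hxS⟩ := hQ₀meet S hSM
    have hSst : IsStableSet G ↑S := (Finset.mem_filter.mp hSM).2.1
    have hxw : 0 < w x := by
      rcases lt_or_eq_of_le (hw x) with hlt | heq
      · exact hlt
      · exfalso
        -- S minus x is also maximum, so it must meet Q₀ elsewhere, contradicting |Q₀ ∩ S| ≤ 1
        have hS'st : IsStableSet G ↑(S.erase x) := by
          apply Set.Pairwise.mono _ hSst
          intro u hu
          exact Finset.mem_coe.mpr (Finset.mem_of_mem_erase (Finset.mem_coe.mp hu))
        have hS'sum : ∑ v ∈ S.erase x, w v = α := by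
          rw [Finset.sum_erase_eq_sub hxS, ← heq, sub_zero]
          exact (Finset.mem_filter.mp hSM).2.2
        have hS'M : S.erase x ∈ M :=
          Finset.mem_filter.mpr ⟨Finset.mem_univ _, hS'st, hS'sum⟩
        obtain ⟨y, hyQ₀, hyS'⟩ := hQ₀meet _ hS'M
        have hyx : y ≠ x := Finset.ne_of_mem_erase hyS'
        have hcard := clique_stable_card_le_one' G hQ₀clique hSst
        rw [Finset.card_le_one] at hcard
        exact hyx (hcard y (Finset.mem_filter.mpr ⟨hyQ₀, Finset.mem_of_mem_erase hyS'⟩)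
          x (Finset.mem_filter.mpr ⟨hxQ₀, hxS⟩))
    exact ⟨x, Finset.mem_filter.mpr ⟨hxQ₀, hxw⟩, hxS⟩
  have hQclique : G.IsClique ↑Q := hQ₀clique.subset (by
    intro x hx
    exact Finset.mem_coe.mpr (Finset.mem_of_mem_filter _ (Finset.mem_coe.mp hx)))
  have hQne : Q.Nonempty := by
    obtain ⟨S, hSM⟩ := hMne
    obtain ⟨x, hxQ, -⟩ := hmeet S hSM
    exact ⟨x, hxQ⟩
  refine ⟨Q, Finset.mem_filter.mpr ⟨Finset.mem_univ _, hQne, hQclique⟩, ?_, ?_⟩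
  · intro v hv
    exact (Finset.mem_filter.mp hv).2
  · intro S hSst hSsum
    exact hmeet S (Finset.mem_filter.mpr ⟨Finset.mem_univ _, hSst, hSsum⟩)

end Key

section Descent
variable {V : Type*} [Fintype V]

lemma dual_exists_zero (G : SimpleGraph V) (w : V → ℝ) (hw0 : ∀ v, w v = 0) :
    ∃ y : Finset V → ℝ, (∀ Q ∈ cliquesOf G, 0 ≤ y Q) ∧
      (∀ v, w v ≤ ∑ Q ∈ (cliquesOf G).filter (fun Q => v ∈ Q), y Q) ∧
      (∑ Q ∈ cliquesOf G, y Q = stableWorth G w Set.univ) := by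
  refine ⟨fun _ => 0, fun _ _ => le_rfl, ?_, ?_⟩
  · intro v
    rw [hw0 v, Finset.sum_const, smul_zero]
  · obtain ⟨S, -, -, heq⟩ := exists_stableWorth G w Set.univ
    rw [Finset.sum_const, smul_zero, heq]
    exact (Finset.sum_eq_zero (fun v _ => hw0 v)).symm

lemma dual_exists_aux (G : SimpleGraph V) (hG : PerfOn G) :
    ∀ (n : ℕ) (w : V → ℝ), (∀ v, 0 ≤ w v) →
    (Finset.univ.filter (fun v => 0 < w v)).card * (Fintype.card (Finset V) + 1)
      + (Fintype.card (Finset V)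
         - (Finset.univ.filter (fun S : Finset V =>
             IsStableSet G ↑S ∧ ∑ v ∈ S, w v = stableWorth G w Set.univ)).card) ≤ n →
    ∃ y : Finset V → ℝ, (∀ Q ∈ cliquesOf G, 0 ≤ y Q) ∧
      (∀ v, w v ≤ ∑ Q ∈ (cliquesOf G).filter (fun Q => v ∈ Q), y Q) ∧
      (∑ Q ∈ cliquesOf G, y Q = stableWorth G w Set.univ) := by
  set N := Fintype.card (Finset V) with hN
  intro n
  induction n with
  | zero =>
    intro w hw hμ
    apply dual_exists_zero
    intro v
    rcases lt_or_eq_of_le (hw v) with hlt | heq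
    · exfalso
      have hv : v ∈ Finset.univ.filter (fun v => 0 < w v) := by
        rw [Finset.mem_filter]; exact ⟨Finset.mem_univ _, hlt⟩
      have h1 : 1 ≤ (Finset.univ.filter (fun v => 0 < w v)).card :=
        Finset.card_pos.mpr ⟨v, hv⟩
      have h2 : (Finset.univ.filter (fun v => 0 < w v)).card * (N + 1) = 0 :=
        Nat.eq_zero_of_le_zero (le_trans (Nat.le_add_right _ _) hμ)
      rcases Nat.mul_eq_zero.mp h2 with h3 | h3 <;> omega
    · exact heq.symm
  | succ n ih =>
    intro w hw hμ
    by_cases hz : ∀ v, w v = 0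
    · exact dual_exists_zero G w hz
    · push_neg at hz
      obtain ⟨v₀, hv₀⟩ := hz
      have hv₀pos : 0 < w v₀ := lt_of_le_of_ne (hw v₀) (Ne.symm hv₀)
      set α := stableWorth G w Set.univ with hα
      have hαpos : 0 < α := by
        have : w v₀ ≤ α := by
          have := le_stableWorth G w (T := Set.univ) {v₀} (by simp) (by simp [IsStableSet])
          simpa using this
        linarith
      obtain ⟨Q, hQcl, hQpos, hQmeet⟩ := key_clique G hG w hw hαpos
      have hQclique : G.IsClique ↑Q := (Finset.mem_filter.mp hQcl).2.2
      have hQne : Q.Nonempty := (Finset.mem_filter.mp hQcl).2.1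
      -- t₁ : the minimum weight on Q
      set t₁ := (Q.image w).min' (hQne.image w) with ht₁
      obtain ⟨v₁, hv₁Q, hv₁w⟩ := Finset.mem_image.mp ((Q.image w).min'_mem (hQne.image w))
      have ht₁le : ∀ v ∈ Q, t₁ ≤ w v := fun v hv =>
        Finset.min'_le _ _ (Finset.mem_image_of_mem w hv)
      have ht₁pos : 0 < t₁ := by rw [ht₁, ← hv₁w]; exact hQpos v₁ hv₁Q
      -- t₂ : the minimum slack of stable sets disjoint from Q
      set D : Finset (Finset V) :=
        Finset.univ.filter (fun S => IsStableSet G ↑S ∧ ∀ x ∈ Q, x ∉ S) with hD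
      have hDne : D.Nonempty := by
        refine ⟨∅, Finset.mem_filter.mpr ⟨Finset.mem_univ _, ?_, by simp⟩⟩
        simp [IsStableSet]
      have hDslack : ∀ S ∈ D, 0 < α - ∑ v ∈ S, w v := by
        intro S hS
        rw [Finset.mem_filter] at hS
        have hle : ∑ v ∈ S, w v ≤ α :=
          le_stableWorth G w S (by simp) hS.2.1
        rcases lt_or_eq_of_le hle with hlt | heq
        · linarith
        · exfalso
          obtain ⟨x, hxQ, hxS⟩ := hQmeet S hS.2.1 heq
          exact hS.2.2 x hxQ hxS
      set t₂ := (D.image (fun S => α - ∑ v ∈ S, w v)).min' (hDne.image _) with ht₂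
      obtain ⟨S₂, hS₂D, hS₂w⟩ := Finset.mem_image.mp
        ((D.image (fun S => α - ∑ v ∈ S, w v)).min'_mem (hDne.image _))
      have ht₂le : ∀ S ∈ D, t₂ ≤ α - ∑ v ∈ S, w v := fun S hS =>
        Finset.min'_le _ _ (Finset.mem_image_of_mem _ hS)
      have ht₂pos : 0 < t₂ := by rw [ht₂, ← hS₂w]; exact hDslack S₂ hS₂D
      have hS₂slack : t₂ = α - ∑ v ∈ S₂, w v := ht₂.trans hS₂w.symm
      set t := min t₁ t₂ with ht
      have htpos : 0 < t := lt_min ht₁pos ht₂pos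
      have htle1 : t ≤ t₁ := by rw [ht]; exact min_le_left _ _
      have htle2 : t ≤ t₂ := by rw [ht]; exact min_le_right _ _
      -- the reduced weights
      set w' : V → ℝ := fun v => w v - (if v ∈ Q then t else 0) with hw'def
      have hw' : ∀ v, 0 ≤ w' v := by
        intro v
        rw [hw'def]
        dsimp only
        by_cases hv : v ∈ Q
        · rw [if_pos hv]
          have := ht₁le v hv
          linarith
        · rw [if_neg hv, sub_zero]
          exact hw v
      have hw'le : ∀ v, w' v ≤ w v := by
        intro v
        rw [hw'def]
        dsimp only
        by_cases hv : v ∈ Q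
        · rw [if_pos hv]
          linarith
        · rw [if_neg hv, sub_zero]
      -- sum formula
      have c1 : ∀ S : Finset V, ∑ v ∈ S, w' v
          = ∑ v ∈ S, w v - ((S.filter (· ∈ Q)).card : ℝ) * t := by
        intro S
        rw [hw'def, Finset.sum_sub_distrib, ← Finset.sum_filter, Finset.sum_const,
          nsmul_eq_mul]
      -- every maximum stable set meets Q exactly once
      have meet1 : ∀ S : Finset V, IsStableSet G ↑S → ∑ v ∈ S, w v = α →
          (S.filter (· ∈ Q)).card = 1 := by
        intro S hSst hSsum
        have hle := clique_stable_card_le_one G hQclique hSst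
        have hge : 1 ≤ (S.filter (· ∈ Q)).card := by
          obtain ⟨x, hxQ, hxS⟩ := hQmeet S hSst hSsum
          exact Finset.card_pos.mpr ⟨x, Finset.mem_filter.mpr ⟨hxS, hxQ⟩⟩
        omega
      -- the new maximum worth
      have hβ : stableWorth G w' Set.univ = α - t := by
        apply le_antisymm
        · obtain ⟨S, -, hSst, heq⟩ := exists_stableWorth G w' Set.univ
          rw [heq, c1 S]
          rcases Nat.eq_zero_or_pos (S.filter (· ∈ Q)).card with hc | hc
          · have hSD : S ∈ D := by
              rw [hD, Finset.mem_filter]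
              refine ⟨Finset.mem_univ _, hSst, ?_⟩
              intro x hxQ hxS
              have : x ∈ S.filter (· ∈ Q) := Finset.mem_filter.mpr ⟨hxS, hxQ⟩
              rw [Finset.card_eq_zero.mp hc] at this
              exact absurd this (Finset.notMem_empty x)
            have := ht₂le S hSD
            rw [hc]
            push_cast
            linarith
          · have h1 : (1 : ℝ) ≤ ((S.filter (· ∈ Q)).card : ℝ) := by exact_mod_cast hc
            have h2 : ∑ v ∈ S, w v ≤ α := le_stableWorth G w S (by simp) hSst
            nlinarith
        · obtain ⟨S₀, -, hS₀st, hS₀eq⟩ := exists_stableWorth G w Set.univ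
          have h1 := c1 S₀
          rw [meet1 S₀ hS₀st hS₀eq.symm] at h1
          have := le_stableWorth G w' (T := Set.univ) S₀ (by simp) hS₀st
          rw [h1, ← hS₀eq] at this
          push_cast at this
          linarith
      -- measure decreases
      set s := (Finset.univ.filter (fun v => 0 < w v)).card with hs
      set s' := (Finset.univ.filter (fun v => 0 < w' v)).card with hs'
      set c := (Finset.univ.filter (fun S : Finset V =>
          IsStableSet G ↑S ∧ ∑ v ∈ S, w v = α)).card with hc
      set c' := (Finset.univ.filter (fun S : Finset V =>
          IsStableSet G ↑S ∧ ∑ v ∈ S, w' v = stableWorth G w' Set.univ)).card with hc'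
      have hsupp : Finset.univ.filter (fun v => 0 < w' v)
          ⊆ Finset.univ.filter (fun v => 0 < w v) := by
        intro v hv
        rw [Finset.mem_filter] at hv ⊢
        exact ⟨Finset.mem_univ _, lt_of_lt_of_le hv.2 (hw'le v)⟩
      have hss : s' ≤ s := Finset.card_le_card hsupp
      have hc'N : c' ≤ N := by
        rw [hN]
        exact (Finset.card_le_card (Finset.subset_univ _)).trans (by rw [Finset.card_univ])
      have hcsub : (Finset.univ.filter (fun S : Finset V =>
            IsStableSet G ↑S ∧ ∑ v ∈ S, w v = α))
          ⊆ (Finset.univ.filter (fun S : Finset V =>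
            IsStableSet G ↑S ∧ ∑ v ∈ S, w' v = stableWorth G w' Set.univ)) := by
        intro S hS
        rw [Finset.mem_filter] at hS ⊢
        refine ⟨Finset.mem_univ _, hS.2.1, ?_⟩
        rw [c1 S, meet1 S hS.2.1 hS.2.2, hS.2.2, hβ]
        push_cast
        ring
      have hmeasure : s' * (N + 1) + (N - c') ≤ n := by
        rcases le_or_gt t₁ t₂ with hcase | hcase
        · -- support shrinks
          have htt : t = t₁ := min_eq_left hcase
          have hv₁w' : w' v₁ = 0 := by
            rw [hw'def]
            dsimp only
            rw [if_pos hv₁Q, htt, ht₁, ← hv₁w]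
            ring
          have hv₁mem : v₁ ∈ Finset.univ.filter (fun v => 0 < w v) := by
            rw [Finset.mem_filter]
            exact ⟨Finset.mem_univ _, hQpos v₁ hv₁Q⟩
          have hv₁not : v₁ ∉ Finset.univ.filter (fun v => 0 < w' v) := by
            rw [Finset.mem_filter, hv₁w']
            simp
          have hslt : s' < s :=
            Finset.card_lt_card (Finset.ssubset_iff_of_subset hsupp |>.mpr
              ⟨v₁, hv₁mem, hv₁not⟩)
          have h2 : (s' + 1) * (N + 1) ≤ s * (N + 1) :=
            Nat.mul_le_mul_right _ hslt
          have h3 : s' * (N + 1) + (N - c') + 1 ≤ (s' + 1) * (N + 1) := by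
            rw [Nat.succ_mul]
            omega
          have h4 : s * (N + 1) ≤ s * (N + 1) + (N - c) := Nat.le_add_right _ _
          omega
        · -- the family of maximum stable sets grows
          have htt : t = t₂ := min_eq_right hcase.le
          have hS₂st : IsStableSet G ↑S₂ := (Finset.mem_filter.mp hS₂D).2.1
          have hS₂dis : ∀ x ∈ Q, x ∉ S₂ := (Finset.mem_filter.mp hS₂D).2.2
          have hS₂card : (S₂.filter (· ∈ Q)).card = 0 := by
            rw [Finset.card_eq_zero, Finset.filter_eq_empty_iff]
            intro x hxS hxQ
            exact hS₂dis x hxQ hxS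
          have hS₂new : S₂ ∈ Finset.univ.filter (fun S : Finset V =>
              IsStableSet G ↑S ∧ ∑ v ∈ S, w' v = stableWorth G w' Set.univ) := by
            rw [Finset.mem_filter]
            refine ⟨Finset.mem_univ _, hS₂st, ?_⟩
            rw [c1 S₂, hS₂card, hβ, htt, hS₂slack]
            push_cast
            ring
          have hS₂old : S₂ ∉ Finset.univ.filter (fun S : Finset V =>
              IsStableSet G ↑S ∧ ∑ v ∈ S, w v = α) := by
            rw [Finset.mem_filter]
            rintro ⟨-, -, hsum⟩
            rw [hsum] at hS₂slack
            linarith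
          have hclt : c < c' :=
            Finset.card_lt_card (Finset.ssubset_iff_of_subset hcsub |>.mpr
              ⟨S₂, hS₂new, hS₂old⟩)
          have h2 : s' * (N + 1) ≤ s * (N + 1) := Nat.mul_le_mul_right _ hss
          omega
      -- recurse
      obtain ⟨y', hy'pos, hy'feas, hy'sum⟩ := ih w' hw' hmeasure
      refine ⟨fun R => y' R + (if R = Q then t else 0), ?_, ?_, ?_⟩
      · intro R hR
        have := hy'pos R hR
        dsimp only
        by_cases h : R = Q
        · rw [if_pos h]; linarith
        · rw [if_neg h]; linarith
      · intro v
        rw [Finset.sum_add_distrib]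
        have hsplit : ∑ R ∈ (cliquesOf G).filter (fun R => v ∈ R), (if R = Q then t else 0)
            = if Q ∈ (cliquesOf G).filter (fun R => v ∈ R) then t else 0 :=
          Finset.sum_ite_eq' _ _ _
        rw [hsplit]
        by_cases hv : v ∈ Q
        · rw [if_pos (Finset.mem_filter.mpr ⟨hQcl, hv⟩)]
          have := hy'feas v
          rw [hw'def] at this
          simp only [if_pos hv] at this
          linarith
        · have hQnot : Q ∉ (cliquesOf G).filter (fun R => v ∈ R) := by
            rw [Finset.mem_filter]
            rintro ⟨-, h⟩
            exact hv h
          rw [if_neg hQnot]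
          have := hy'feas v
          rw [hw'def] at this
          simp only [if_neg hv, sub_zero] at this
          linarith
      · rw [Finset.sum_add_distrib, hy'sum, hβ,
          Finset.sum_ite_eq' (cliquesOf G) Q (fun _ => t), if_pos hQcl]
        ring

end Descent

section Final
variable {V : Type*} [Fintype V]

lemma dual_exists (G : SimpleGraph V) (hG : PerfOn G) (w : V → ℝ) (hw : ∀ v, 0 ≤ w v) :
    ∃ y : Finset V → ℝ, (∀ Q ∈ cliquesOf G, 0 ≤ y Q) ∧
      (∀ v, w v ≤ ∑ Q ∈ (cliquesOf G).filter (fun Q => v ∈ Q), y Q) ∧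
      (∑ Q ∈ cliquesOf G, y Q = stableWorth G w Set.univ) :=
  dual_exists_aux G hG _ w hw le_rfl

lemma isPerfect_perfOn {G : SimpleGraph V} (hG : IsPerfect G) : PerfOn G := fun T =>
  SimpleGraph.chromaticNumber_le_iff_colorable.mp (le_of_eq (hG T))

end Final

theorem stable_set_game_core_iff_dual_optimal
    {V : Type*} [Fintype V] (G : SimpleGraph V) (hG : IsPerfect G)
    (w : V → ℝ) (hw : ∀ v, 0 ≤ w v)
    (y : Finset V → ℝ) (hy : ∀ Q ∈ cliquesOf G, 0 ≤ y Q) :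
    -- `y` is in the core of the stable set game
    ((∑ Q ∈ cliquesOf G, y Q = stableWorth G w Set.univ) ∧
      ∀ T : Set V,
        stableWorth G w T ≤ ∑ Q ∈ (cliquesOf G).filter (fun Q : Finset V => ((Q : Set V) ∩ T).Nonempty), y Q)
    ↔
    -- `y` is an optimal solution of the dual LP
    ((∀ v : V, w v ≤ ∑ Q ∈ (cliquesOf G).filter (fun Q => v ∈ Q), y Q) ∧
      ∀ y' : Finset V → ℝ, (∀ Q ∈ cliquesOf G, 0 ≤ y' Q) →
        (∀ v : V, w v ≤ ∑ Q ∈ (cliquesOf G).filter (fun Q => v ∈ Q), y' Q) →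
        ∑ Q ∈ cliquesOf G, y Q ≤ ∑ Q ∈ cliquesOf G, y' Q) := by
  constructor
  · rintro ⟨hsum, hcond⟩
    constructor
    · -- core implies dual feasibility
      intro v
      have h1 : w v ≤ stableWorth G w {v} := by
        have := le_stableWorth G w (T := {v}) {v} (by simp) (by simp [IsStableSet])
        simpa using this
      refine h1.trans ((hcond {v}).trans (le_of_eq ?_))
      refine Finset.sum_congr ?_ (fun _ _ => rfl)
      apply Finset.filter_congr
      intro Q hQ
      constructor
      · rintro ⟨x, hx1, hx2⟩
        rw [Set.mem_singleton_iff] at hx2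
        subst hx2
        exact hx1
      · intro h
        exact ⟨v, h, rfl⟩
    · -- core implies dual optimality (weak duality)
      intro y' hy'pos hy'feas
      rw [hsum]
      obtain ⟨S, -, hSst, heq⟩ := exists_stableWorth G w Set.univ
      rw [heq]
      have := stable_sum_le G w y' hy'pos S hSst (fun v _ => hy'feas v)
        (fun _ => True) (fun _ _ _ => trivial)
      simpa [Finset.filter_true] using this
  · rintro ⟨hfeas, hopt⟩
    have hPerf : PerfOn G := isPerfect_perfOn hG
    obtain ⟨ys, hyspos, hysfeas, hyssum⟩ := dual_exists G hPerf w hw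
    have hweak : stableWorth G w Set.univ ≤ ∑ Q ∈ cliquesOf G, y Q := by
      obtain ⟨S, -, hSst, heq⟩ := exists_stableWorth G w Set.univ
      rw [heq]
      have := stable_sum_le G w y hy S hSst (fun v _ => hfeas v)
        (fun _ => True) (fun _ _ _ => trivial)
      simpa [Finset.filter_true] using this
    have hle : ∑ Q ∈ cliquesOf G, y Q ≤ stableWorth G w Set.univ := by
      rw [← hyssum]
      exact hopt ys hyspos hysfeas
    refine ⟨le_antisymm hle hweak, ?_⟩
    intro T
    obtain ⟨S, hsub, hSst, heq⟩ := exists_stableWorth G w T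
    rw [heq]
    apply stable_sum_le G w y hy S hSst (fun v _ => hfeas v)
    rintro Q hQ ⟨x, hxQ, hxS⟩
    exact ⟨x, hxQ, hsub hxS⟩
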